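/- Fix integers K ≥ 1 and 1 ≤ i ≤ K, a real δ ∈ [0,1) and a real N > 0. Define β_j = 1 − δ^{K−j+1} for i ≤ j ≤ K and α_{l→j} = δ^{K−j+1}(1−δ)^{j−l} for l < j, and define the GGT subphase lengths recursively by t_i = N/β_i and t_j = (1/β_j) Σ_{l=i}^{j−1} C(j−1, l−1) t_l α_{l→j} for i < j ≤ K. Then the total number of transmissions satisfies Σ_{j=i}^{K} C(K, j) · t_j = N · Σ_{k=1}^{K−i+1} C(K−k, i−1)/(1 − δ^k). Consequently the order-i sum rate achieved by the algorithm, C(K,i)·N / Σ_{j=i}^K C(K,j) t_j, equals C(K,i) / Σ_{k=1}^{K−i+1} C(K−k, i−1)/(1−δ^k). -/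

import Mathlib

open Finset

private lemma ggt_summable {δ : ℝ} (h0 : 0 ≤ δ) (h1 : δ < 1) (c e : ℕ) (hc : 1 ≤ c) :
    Summable (fun r : ℕ => δ ^ (r * c) * (1 - δ ^ r) ^ e) := by
  have hd : ∀ r : ℕ, (0:ℝ) ≤ 1 - δ ^ r := fun r => sub_nonneg.2 (pow_le_one₀ h0 h1.le)
  refine Summable.of_nonneg_of_le (fun r => ?_) (fun r => ?_)
    (summable_geometric_of_lt_one (pow_nonneg h0 c) (pow_lt_one₀ h0 h1 (by omega)))
  · exact mul_nonneg (pow_nonneg h0 _) (pow_nonneg (hd r) _)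
  · calc δ ^ (r * c) * (1 - δ ^ r) ^ e ≤ δ ^ (r * c) * 1 := by
          exact mul_le_mul_of_nonneg_left (pow_le_one₀ (hd r) (by linarith [pow_nonneg h0 r])) (pow_nonneg h0 _)
    _ = (δ ^ c) ^ r := by rw [mul_one, mul_comm, pow_mul]

private lemma ggt_choose_mul (a b s : ℕ) (hs : s ≤ b + 1) :
    ((a + b + 1).choose (a + s) : ℝ) * ((a + s).choose a : ℝ)
      = ((a + b + 1).choose a : ℝ) * ((b + 1).choose s : ℝ) := by
  have h := Nat.choose_mul (n := a + b + 1) (k := a + s) (s := a) (by omega)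
  have h1 : a + b + 1 - a = b + 1 := by omega
  have h2 : a + s - a = s := by omega
  rw [h1, h2] at h
  exact_mod_cast congrArg (Nat.cast (R := ℝ)) h

/-- key recursion for `W j` -/
private lemma ggt_Wrec {δ : ℝ} (h0 : 0 ≤ δ) (h1 : δ < 1) (K i j : ℕ) (hi : 1 ≤ i)
    (hij : i < j) (hjK : j ≤ K) :
    ∑ l ∈ Icc i (j-1), ((j-i).choose (l-i) : ℝ) * (1-δ)^(j-l) * (δ^(K-j+1) *
      ∑' r : ℕ, δ ^ (r * (K - l + 1)) * (1 - δ ^ r) ^ (l - i))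
    = (1 - δ^(K-j+1)) * ∑' r : ℕ, δ ^ (r * (K - j + 1)) * (1 - δ ^ r) ^ (j - i) := by
  set c := K - j + 1 with hc
  have hc1 : 1 ≤ c := by omega
  set f : ℕ → ℝ := fun r => δ ^ (r * c) * (1 - δ ^ r) ^ (j - i) with hf
  have hfs : Summable f := ggt_summable h0 h1 c (j-i) hc1
  -- per-l summability of inner function
  have hsum : ∀ l ∈ Icc i (j-1), Summable (fun r : ℕ =>
      ((j-i).choose (l-i) : ℝ) * (1-δ)^(j-l) * δ^c * (δ ^ (r * (K - l + 1)) * (1 - δ ^ r) ^ (l - i))) := by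
    intro l hl
    rw [Finset.mem_Icc] at hl
    exact (ggt_summable h0 h1 (K - l + 1) (l-i) (by omega)).mul_left _
  -- LHS = tsum of finite sums
  have step1 : ∑ l ∈ Icc i (j-1), ((j-i).choose (l-i) : ℝ) * (1-δ)^(j-l) * (δ^c *
        ∑' r : ℕ, δ ^ (r * (K - l + 1)) * (1 - δ ^ r) ^ (l - i))
      = ∑' r : ℕ, ∑ l ∈ Icc i (j-1), ((j-i).choose (l-i) : ℝ) * (1-δ)^(j-l) * δ^c *
          (δ ^ (r * (K - l + 1)) * (1 - δ ^ r) ^ (l - i)) := by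
    rw [Summable.tsum_finsetSum hsum]
    refine Finset.sum_congr rfl fun l _ => ?_
    rw [tsum_mul_left]; ring
  -- pointwise identity in r
  have step2 : ∀ r : ℕ, ∑ l ∈ Icc i (j-1), ((j-i).choose (l-i) : ℝ) * (1-δ)^(j-l) * δ^c *
        (δ ^ (r * (K - l + 1)) * (1 - δ ^ r) ^ (l - i))
      = f (r+1) - δ^c * f r := by
    intro r
    have hfull : ∑ l ∈ Icc i j, ((j-i).choose (l-i) : ℝ) * (1-δ)^(j-l) * δ^c *
        (δ ^ (r * (K - l + 1)) * (1 - δ ^ r) ^ (l - i)) = f (r+1) := by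
      rw [← Finset.Ico_add_one_right_eq_Icc, Finset.sum_Ico_eq_sum_range]
      have hn : j + 1 - i = (j - i) + 1 := by omega
      rw [hn]
      have hterm : ∀ s ∈ range ((j-i)+1),
          ((j-i).choose ((i+s)-i) : ℝ) * (1-δ)^(j-(i+s)) * δ^c *
            (δ ^ (r * (K - (i+s) + 1)) * (1 - δ ^ r) ^ ((i+s) - i))
          = δ ^ ((r+1)*c) * ((1 - δ^r) ^ s * ((1-δ) * δ^r) ^ ((j-i) - s) * ((j-i).choose s : ℝ)) := by
        intro s hs
        rw [Finset.mem_range] at hs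
        have e1 : (i+s) - i = s := by omega
        have e2 : j - (i+s) = (j-i) - s := by omega
        have e3 : K - (i+s) + 1 = c + ((j-i) - s) := by omega
        rw [e1, e2, e3, pow_add, mul_pow, (pow_mul δ r ((j-i)-s)).symm,
          show (r+1)*c = r*c + c by ring, pow_add]
        ring
      rw [Finset.sum_congr rfl hterm, ← Finset.mul_sum, ← add_pow (1-δ^r) ((1-δ)*δ^r) (j-i)]
      have e4 : (1 - δ^r) + (1-δ) * δ^r = 1 - δ^(r+1) := by rw [pow_succ]; ring
      rw [e4, hf]
    have hsplit : ∑ l ∈ Icc i j, ((j-i).choose (l-i) : ℝ) * (1-δ)^(j-l) * δ^c *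
          (δ ^ (r * (K - l + 1)) * (1 - δ ^ r) ^ (l - i))
        = (∑ l ∈ Icc i (j-1), ((j-i).choose (l-i) : ℝ) * (1-δ)^(j-l) * δ^c *
          (δ ^ (r * (K - l + 1)) * (1 - δ ^ r) ^ (l - i))) + δ^c * f r := by
      rw [show j = (j-1)+1 by omega, Finset.sum_Icc_succ_top (by omega)]
      congr 1
      rw [show (j-1)+1 = j by omega]
      rw [Nat.sub_self, pow_zero, Nat.choose_self, Nat.cast_one, hf,
        show K - j + 1 = c from rfl]
      ring
    rw [hfull] at hsplit
    linarith [hsplit]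
  rw [step1, tsum_congr step2, Summable.tsum_sub ((summable_nat_add_iff 1).2 hfs) (hfs.mul_left _),
    tsum_mul_left]
  have h0' : f 0 = 0 := by
    rw [hf]; simp only [Nat.zero_mul, pow_zero, sub_self]
    rw [zero_pow (by omega), mul_zero]
  have := Summable.tsum_eq_zero_add hfs
  rw [h0', zero_add] at this
  rw [← this]
  ring
private lemma ggt_poly_aux (a : ℕ) (x : ℝ) : ∀ b : ℕ,
    ∑ s ∈ range (b + 1), ((a + 1 + b).choose (a + 1 + s) : ℝ) * ((a + s).choose a : ℝ)
        * x ^ (b + 1 - s) * (1 - x) ^ s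
      = ∑ s ∈ range (b + 1), ((a + b - s).choose a : ℝ) * x ^ (s + 1) := by
  intro b
  induction b with
  | zero => simp
  | succ b ih =>
    have pascal : ∀ s : ℕ, ((a + 1 + (b+1)).choose (a + 1 + s) : ℝ)
        = ((a + b + 1).choose (a + s) : ℝ) + ((a + b + 1).choose (a + 1 + s) : ℝ) := by
      intro s
      have h1 : a + 1 + (b+1) = (a + b + 1) + 1 := by omega
      have h2 : a + 1 + s = (a + s) + 1 := by omega
      rw [h1, h2, Nat.choose_succ_succ']
      push_cast
      rw [show (a+s)+1 = a+1+s by omega]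
    have split : ∑ s ∈ range (b + 2), ((a + 1 + (b+1)).choose (a + 1 + s) : ℝ) * ((a + s).choose a : ℝ)
          * x ^ (b + 2 - s) * (1 - x) ^ s
        = (∑ s ∈ range (b + 2), ((a + b + 1).choose (a + s) : ℝ) * ((a + s).choose a : ℝ)
            * x ^ (b + 2 - s) * (1 - x) ^ s)
          + ∑ s ∈ range (b + 2), ((a + b + 1).choose (a + 1 + s) : ℝ) * ((a + s).choose a : ℝ)
            * x ^ (b + 2 - s) * (1 - x) ^ s := by
      rw [← Finset.sum_add_distrib]
      refine Finset.sum_congr rfl fun s _ => ?_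
      rw [pascal s]; ring
    -- B part: binomial
    have Bpart : ∑ s ∈ range (b + 2), ((a + b + 1).choose (a + s) : ℝ) * ((a + s).choose a : ℝ)
          * x ^ (b + 2 - s) * (1 - x) ^ s
        = ((a + b + 1).choose a : ℝ) * x := by
      have : ∀ s ∈ range (b + 2), ((a + b + 1).choose (a + s) : ℝ) * ((a + s).choose a : ℝ)
          * x ^ (b + 2 - s) * (1 - x) ^ s
          = ((a + b + 1).choose a : ℝ) * (x * ((1 - x) ^ s * x ^ (b + 1 - s) * ((b+1).choose s : ℝ))) := by
        intro s hs
        rw [Finset.mem_range] at hs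
        rw [ggt_choose_mul a b s (by omega), show b + 2 - s = (b + 1 - s) + 1 by omega, pow_succ]
        ring
      rw [Finset.sum_congr rfl this, ← Finset.mul_sum, ← Finset.mul_sum, ← add_pow (1-x) x (b+1)]
      norm_num
    -- A part: drop top, factor x
    have Apart : ∑ s ∈ range (b + 2), ((a + b + 1).choose (a + 1 + s) : ℝ) * ((a + s).choose a : ℝ)
          * x ^ (b + 2 - s) * (1 - x) ^ s
        = x * ∑ s ∈ range (b + 1), ((a + 1 + b).choose (a + 1 + s) : ℝ) * ((a + s).choose a : ℝ)
            * x ^ (b + 1 - s) * (1 - x) ^ s := by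
      rw [Finset.sum_range_succ, show a + 1 + (b+1) = a + b + 2 by omega]
      rw [Nat.choose_eq_zero_of_lt (by omega)]
      rw [Finset.mul_sum]
      simp only [Nat.cast_zero, zero_mul, add_zero]
      refine Finset.sum_congr rfl fun s hs => ?_
      rw [Finset.mem_range] at hs
      rw [show a + 1 + b = a + b + 1 by omega, show b + 2 - s = (b + 1 - s) + 1 by omega, pow_succ]
      ring
    -- RHS recursion
    have Rpart : ∑ s ∈ range (b + 2), ((a + (b+1) - s).choose a : ℝ) * x ^ (s + 1)
        = x * (∑ s ∈ range (b + 1), ((a + b - s).choose a : ℝ) * x ^ (s + 1))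
          + ((a + b + 1).choose a : ℝ) * x := by
      rw [Finset.sum_range_succ' (fun s => ((a + (b+1) - s).choose a : ℝ) * x ^ (s + 1)) (b+1)]
      rw [Finset.mul_sum]
      congr 1
      · refine Finset.sum_congr rfl fun s hs => ?_
        rw [show a + (b+1) - (s+1) = a + b - s by omega]
        ring
      · rw [show a + (b+1) - 0 = a + b + 1 by omega]; norm_num
    calc ∑ s ∈ range (b + 1 + 1), ((a + 1 + (b+1)).choose (a + 1 + s) : ℝ) * ((a + s).choose a : ℝ)
          * x ^ (b + 1 + 1 - s) * (1 - x) ^ s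
        = x * (∑ s ∈ range (b + 1), ((a + 1 + b).choose (a + 1 + s) : ℝ) * ((a + s).choose a : ℝ)
            * x ^ (b + 1 - s) * (1 - x) ^ s) + ((a + b + 1).choose a : ℝ) * x := by
          rw [show b+1+1 = b+2 from rfl] at *
          rw [split, Bpart, Apart]; ring
      _ = x * (∑ s ∈ range (b + 1), ((a + b - s).choose a : ℝ) * x ^ (s + 1))
            + ((a + b + 1).choose a : ℝ) * x := by rw [ih]
      _ = ∑ s ∈ range (b + 1 + 1), ((a + (b+1) - s).choose a : ℝ) * x ^ (s + 1) := by
          rw [Rpart]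
private lemma ggt_poly (i K : ℕ) (hi : 1 ≤ i) (hiK : i ≤ K) (x : ℝ) :
    ∑ s ∈ range (K - i + 1), (K.choose (i+s) : ℝ) * ((i+s-1).choose (i-1) : ℝ)
        * x ^ (K - (i+s) + 1) * (1-x) ^ s
      = ∑ s ∈ range (K - i + 1), ((K-1-s).choose (i-1) : ℝ) * x ^ (s+1) := by
  obtain ⟨a, rfl⟩ : ∃ a, i = a + 1 := ⟨i - 1, by omega⟩
  obtain ⟨b, rfl⟩ : ∃ b, K = a + 1 + b := ⟨K - (a+1), by omega⟩
  have hb : a + 1 + b - (a + 1) + 1 = b + 1 := by omega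
  rw [hb]
  have L : ∀ s ∈ range (b+1),
      ((a+1+b).choose ((a+1)+s) : ℝ) * (((a+1)+s-1).choose ((a+1)-1) : ℝ)
        * x ^ ((a+1+b) - ((a+1)+s) + 1) * (1-x) ^ s
      = ((a + 1 + b).choose (a + 1 + s) : ℝ) * ((a + s).choose a : ℝ) * x ^ (b + 1 - s) * (1 - x) ^ s := by
    intro s hs
    rw [Finset.mem_range] at hs
    rw [show (a+1)+s-1 = a+s by omega, show (a+1)-1 = a by omega,
      show (a+1+b) - ((a+1)+s) + 1 = b + 1 - s by omega]
  have R : ∀ s ∈ range (b+1),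
      (((a+1+b)-1-s).choose ((a+1)-1) : ℝ) * x ^ (s+1)
      = ((a + b - s).choose a : ℝ) * x ^ (s + 1) := by
    intro s hs
    rw [show (a+1+b)-1-s = a+b-s by omega, show (a+1)-1 = a by omega]
  rw [Finset.sum_congr rfl L, Finset.sum_congr rfl R]
  exact ggt_poly_aux a x b
/-- Achievability part of Lemma 3: the GGT algorithm started at
phase `i` with `N` packets per `i`-subset uses
`Σ_{j=i}^K C(K,j) t_j = N Σ_{k=1}^{K-i+1} C(K-k,i-1)/(1-δ^k)` transmissions, so
the achieved order-`i` sum rate `C(K,i) N / Σ_{j=i}^K C(K,j) t_j` equals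
`C(K,i) / Σ_{k=1}^{K-i+1} C(K-k,i-1)/(1-δ^k)`. -/
theorem ggt_total_length_and_rate (K i : ℕ) (hi : 1 ≤ i) (hiK : i ≤ K)
    (δ N : ℝ) (hδ0 : 0 ≤ δ) (hδ1 : δ < 1) (hN : 0 < N)
    (β : ℕ → ℝ) (hβ : ∀ j, i ≤ j → j ≤ K → β j = 1 - δ ^ (K - j + 1))
    (α : ℕ → ℕ → ℝ) (hα : ∀ l j, l < j → α l j = δ ^ (K - j + 1) * (1 - δ) ^ (j - l))
    (t : ℕ → ℝ) (hti : t i = N / β i)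
    (htj : ∀ j, i < j → j ≤ K →
      t j = (1 / β j) * ∑ l ∈ Finset.Icc i (j - 1), (Nat.choose (j - 1) (l - 1) : ℝ) * t l * α l j) :
    (∑ j ∈ Finset.Icc i K, (Nat.choose K j : ℝ) * t j
        = N * ∑ k ∈ Finset.Icc 1 (K - i + 1), (Nat.choose (K - k) (i - 1) : ℝ) / (1 - δ ^ k))
    ∧ (Nat.choose K i : ℝ) * N / (∑ j ∈ Finset.Icc i K, (Nat.choose K j : ℝ) * t j)
        = (Nat.choose K i : ℝ)
          / (∑ k ∈ Finset.Icc 1 (K - i + 1), (Nat.choose (K - k) (i - 1) : ℝ) / (1 - δ ^ k)) := by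
  have hpow : ∀ c : ℕ, 1 ≤ c → δ ^ c < 1 := fun c hc => pow_lt_one₀ hδ0 hδ1 (by omega)
  -- closed form for t
  have key : ∀ j, i ≤ j → j ≤ K → t j = N * ((j-1).choose (i-1) : ℝ) *
      ∑' r : ℕ, δ ^ (r * (K - j + 1)) * (1 - δ ^ r) ^ (j - i) := by
    intro j
    induction j using Nat.strong_induction_on with
    | _ j ih =>
      intro hij hjK
      rcases eq_or_lt_of_le hij with rfl | hlt
      · have hgeo : ∑' r : ℕ, δ ^ (r * (K - i + 1)) * (1 - δ ^ r) ^ (i - i)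
            = (1 - δ ^ (K - i + 1))⁻¹ := by
          rw [← tsum_geometric_of_lt_one (pow_nonneg hδ0 (K-i+1)) (hpow _ (by omega))]
          refine tsum_congr fun r => ?_
          rw [Nat.sub_self, pow_zero, mul_one, mul_comm, pow_mul]
        rw [hti, hβ i le_rfl hiK, hgeo, Nat.choose_self, Nat.cast_one, div_eq_mul_inv]
        ring
      · have hβne : (1:ℝ) - δ ^ (K - j + 1) ≠ 0 :=
          ne_of_gt (sub_pos.2 (hpow _ (by omega)))
        rw [htj j hlt hjK, hβ j hij hjK]
        have hterm : ∀ l ∈ Icc i (j-1),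
            ((j-1).choose (l-1) : ℝ) * t l * α l j
            = (N * ((j-1).choose (i-1) : ℝ)) * (((j-i).choose (l-i) : ℝ) * (1-δ)^(j-l)
              * (δ^(K-j+1) * ∑' r : ℕ, δ ^ (r * (K - l + 1)) * (1 - δ ^ r) ^ (l - i))) := by
          intro l hl
          rw [Finset.mem_Icc] at hl
          rw [ih l (by omega) hl.1 (by omega), hα l j (by omega)]
          have tri : ((j-1).choose (l-1) : ℝ) * ((l-1).choose (i-1) : ℝ)
              = ((j-1).choose (i-1) : ℝ) * ((j-i).choose (l-i) : ℝ) := by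
            have h := Nat.choose_mul (n := j-1) (k := l-1) (s := i-1) (by omega)
            rw [show j-1-(i-1) = j-i by omega, show l-1-(i-1) = l-i by omega] at h
            exact_mod_cast congrArg (Nat.cast (R := ℝ)) h
          calc ((j-1).choose (l-1) : ℝ)
                * (N * ((l-1).choose (i-1) : ℝ) * ∑' r : ℕ, δ ^ (r * (K - l + 1)) * (1 - δ ^ r) ^ (l - i))
                * (δ ^ (K - j + 1) * (1 - δ) ^ (j - l))
              = ((j-1).choose (l-1) : ℝ) * ((l-1).choose (i-1) : ℝ)
                * (N * (∑' r : ℕ, δ ^ (r * (K - l + 1)) * (1 - δ ^ r) ^ (l - i))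
                  * (δ ^ (K - j + 1) * (1 - δ) ^ (j - l))) := by ring
            _ = ((j-1).choose (i-1) : ℝ) * ((j-i).choose (l-i) : ℝ)
                * (N * (∑' r : ℕ, δ ^ (r * (K - l + 1)) * (1 - δ ^ r) ^ (l - i))
                  * (δ ^ (K - j + 1) * (1 - δ) ^ (j - l))) := by rw [tri]
            _ = _ := by ring
        rw [Finset.sum_congr rfl hterm, ← Finset.mul_sum,
          ggt_Wrec hδ0 hδ1 K i j hi hlt hjK]
        field_simp
  -- part 1
  have part1 : ∑ j ∈ Icc i K, (K.choose j : ℝ) * t j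
      = N * ∑ k ∈ Icc 1 (K - i + 1), ((K-k).choose (i-1) : ℝ) / (1 - δ ^ k) := by
    have hL : ∑ j ∈ Icc i K, (K.choose j : ℝ) * t j
        = ∑ s ∈ range (K - i + 1), (K.choose (i+s) : ℝ) * t (i+s) := by
      rw [← Finset.Ico_add_one_right_eq_Icc, Finset.sum_Ico_eq_sum_range,
        show K + 1 - i = K - i + 1 by omega]
    have hR : ∑ k ∈ Icc 1 (K - i + 1), ((K-k).choose (i-1) : ℝ) / (1 - δ ^ k)
        = ∑ s ∈ range (K - i + 1), ((K-1-s).choose (i-1) : ℝ) * (1 - δ ^ (s+1))⁻¹ := by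
      rw [← Finset.Ico_add_one_right_eq_Icc, Finset.sum_Ico_eq_sum_range,
        show K - i + 1 + 1 - 1 = K - i + 1 by omega]
      refine Finset.sum_congr rfl fun s hs => ?_
      rw [show K - (1+s) = K-1-s by omega, div_eq_mul_inv, show 1+s = s+1 by omega]
    rw [hL, hR]
    have hsub : ∀ s ∈ range (K - i + 1), (K.choose (i+s) : ℝ) * t (i+s)
        = N * ∑' r : ℕ, (K.choose (i+s) : ℝ) * (((i+s-1).choose (i-1)) : ℝ)
            * (δ ^ (r * (K - (i+s) + 1)) * (1 - δ ^ r) ^ ((i+s) - i)) := by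
      intro s hs
      rw [Finset.mem_range] at hs
      rw [key (i+s) (by omega) (by omega),
        tsum_mul_left (a := (K.choose (i+s) : ℝ) * (((i+s-1).choose (i-1)) : ℝ))]
      ring
    rw [Finset.sum_congr rfl hsub, ← Finset.mul_sum]
    congr 1
    have hsum1 : ∀ s ∈ range (K - i + 1), Summable (fun r : ℕ =>
        (K.choose (i+s) : ℝ) * (((i+s-1).choose (i-1)) : ℝ)
          * (δ ^ (r * (K - (i+s) + 1)) * (1 - δ ^ r) ^ ((i+s) - i))) := by
      intro s hs
      rw [Finset.mem_range] at hs
      exact (ggt_summable hδ0 hδ1 (K - (i+s) + 1) ((i+s)-i) (by omega)).mul_left _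
    rw [← Summable.tsum_finsetSum hsum1]
    have hpt : ∀ r : ℕ, ∑ s ∈ range (K - i + 1),
        (K.choose (i+s) : ℝ) * (((i+s-1).choose (i-1)) : ℝ)
          * (δ ^ (r * (K - (i+s) + 1)) * (1 - δ ^ r) ^ ((i+s) - i))
        = ∑ s ∈ range (K - i + 1), ((K-1-s).choose (i-1) : ℝ) * (δ^(s+1))^r := by
      intro r
      have e1 : ∀ s ∈ range (K - i + 1),
          (K.choose (i+s) : ℝ) * (((i+s-1).choose (i-1)) : ℝ)
            * (δ ^ (r * (K - (i+s) + 1)) * (1 - δ ^ r) ^ ((i+s) - i))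
          = (K.choose (i+s) : ℝ) * (((i+s-1).choose (i-1)) : ℝ)
            * (δ^r) ^ (K - (i+s) + 1) * (1 - δ^r) ^ s := by
        intro s hs
        rw [show (i+s) - i = s by omega, pow_mul]
        ring
      rw [Finset.sum_congr rfl e1, ggt_poly i K hi hiK (δ^r)]
      exact Finset.sum_congr rfl fun s _ => by rw [pow_right_comm]
    rw [tsum_congr hpt, Summable.tsum_finsetSum (fun s _ =>
      (summable_geometric_of_lt_one (pow_nonneg hδ0 _) (hpow (s+1) (by omega))).mul_left _)]
    refine Finset.sum_congr rfl fun s _ => ?_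
    rw [tsum_mul_left, tsum_geometric_of_lt_one (pow_nonneg hδ0 _) (hpow (s+1) (by omega))]
  refine ⟨part1, ?_⟩
  rw [part1, mul_comm ((K.choose i : ℝ)) N,
    mul_div_mul_left _ _ (ne_of_gt hN)]
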